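/- Let D ⊂ ℂ be a domain (nonempty open connected set) that is convex in the positive direction and satisfies D ∩ ℝ ≠ ∅. Then there exists x₀ ∈ ℝ such that the half-line {x ∈ ℝ : x ≥ x₀} is contained in D ∩ D*, and both sets (D ∪ D*) ∩ {z : Im z ≥ 0} and (D ∩ D*) ∩ {z : Im z ≤ 0} are nonempty and connected, where D* = {conj(z) : z ∈ D}. -/
import Mathlib


open Complex

/-- A set `A ⊆ ℂ` is convex in the positive direction if `z + t ∈ A`
for every `z ∈ A` and `t ≥ 0`. -/
def ConvexPosDir (A : Set ℂ) : Prop :=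
  ∀ z ∈ A, ∀ t : ℝ, 0 ≤ t → z + t ∈ A

/-- Reflection of a set in the real axis: `A* = {conj z : z ∈ A}`. -/
def reflectSet (A : Set ℂ) : Set ℂ := (fun z => (starRingEnd ℂ) z) '' A

lemma mem_reflectSet {A : Set ℂ} {z : ℂ} :
    z ∈ reflectSet A ↔ (starRingEnd ℂ) z ∈ A := by
  constructor
  · rintro ⟨w, hw, rfl⟩
    simpa using hw
  · intro h
    exact ⟨_, h, Complex.conj_conj z⟩

lemma reflectSet_convexPosDir {A : Set ℂ} (h : ConvexPosDir A) :
    ConvexPosDir (reflectSet A) := by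
  intro z hz t ht
  rw [mem_reflectSet] at hz ⊢
  have := h _ hz t ht
  simpa using this

/-- If `D` is a domain convex in the positive direction meeting the real axis,
then `D ∩ D*` contains a real half-line and both `(D ∪ D*)⁺` and `(D ∩ D*)⁻`
are nonempty and connected. -/
theorem halfline_and_connected_pieces (D : Set ℂ) (hne : D.Nonempty)
    (hopen : IsOpen D) (hconn : IsConnected D) (hconv : ConvexPosDir D)
    (hreal : (D ∩ {z : ℂ | z.im = 0}).Nonempty) :
    (∃ x₀ : ℝ, ∀ x : ℝ, x₀ ≤ x → (x : ℂ) ∈ D ∩ reflectSet D) ∧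
      IsConnected ((D ∪ reflectSet D) ∩ {z : ℂ | 0 ≤ z.im}) ∧
      IsConnected ((D ∩ reflectSet D) ∩ {z : ℂ | z.im ≤ 0}) := by
  obtain ⟨z₀, hz₀D, hz₀im⟩ := hreal
  have hz₀im : z₀.im = 0 := hz₀im
  have hz₀eq : ((z₀.re : ℝ) : ℂ) = z₀ := by
    apply Complex.ext <;> simp [hz₀im]
  set x₀ := z₀.re with hx₀
  have hz₀refl : z₀ ∈ reflectSet D := by
    rw [mem_reflectSet]
    have : (starRingEnd ℂ) z₀ = z₀ := by
      apply Complex.ext <;> simp [hz₀im]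
    rw [this]; exact hz₀D
  have hconvR : ConvexPosDir (reflectSet D) := reflectSet_convexPosDir hconv
  have hconvE : ConvexPosDir (D ∩ reflectSet D) := fun z hz t ht =>
    ⟨hconv z hz.1 t ht, hconvR z hz.2 t ht⟩
  have hz₀E : z₀ ∈ D ∩ reflectSet D := ⟨hz₀D, hz₀refl⟩
  -- the half-line
  have hhalf : ∀ x : ℝ, x₀ ≤ x → (x : ℂ) ∈ D ∩ reflectSet D := by
    intro x hx
    have h := hconvE z₀ hz₀E (x - x₀) (by linarith)
    have hxeq : z₀ + ((x - x₀ : ℝ) : ℂ) = (x : ℂ) := by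
      rw [← hz₀eq]; push_cast; ring
    rwa [hxeq] at h
  refine ⟨⟨x₀, hhalf⟩, ?_, ?_⟩
  · -- connectedness of (D ∪ D*) ∩ {0 ≤ im}
    have hconnR : IsConnected (reflectSet D) :=
      hconn.image _ (Complex.continuous_conj.continuousOn)
    have hU : IsConnected (D ∪ reflectSet D) :=
      IsConnected.union ⟨z₀, hz₀D, hz₀refl⟩ hconn hconnR
    set f : ℂ → ℂ := fun z => (z.re : ℂ) + (|z.im| : ℝ) * I with hf
    have hfc : Continuous f := by
      apply Continuous.add
      · exact Complex.continuous_ofReal.comp Complex.continuous_re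
      · exact (Complex.continuous_ofReal.comp (continuous_abs.comp Complex.continuous_im)).mul
          continuous_const
    have himg : f '' (D ∪ reflectSet D) = (D ∪ reflectSet D) ∩ {z : ℂ | 0 ≤ z.im} := by
      ext w
      constructor
      · rintro ⟨z, hz, rfl⟩
        rcases le_or_gt 0 z.im with h | h
        · have hfz : f z = z := by
            apply Complex.ext <;> simp [hf, _root_.abs_of_nonneg h]
          rw [hfz]
          exact ⟨hz, h⟩
        · have hfz : f z = (starRingEnd ℂ) z := by
            apply Complex.ext <;> simp [hf, _root_.abs_of_neg h]
          rw [hfz]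
          refine ⟨?_, by simpa using le_of_lt h⟩
          rcases hz with hz | hz
          · exact Or.inr ⟨z, hz, rfl⟩
          · rw [mem_reflectSet] at hz
            exact Or.inl hz
      · rintro ⟨hw, hwim⟩
        refine ⟨w, hw, ?_⟩
        apply Complex.ext <;> simp [hf, _root_.abs_of_nonneg (show (0:ℝ) ≤ w.im from hwim)]
    rw [← himg]
    exact hU.image f hfc.continuousOn
  · -- connectedness of (D ∩ D*) ∩ {im ≤ 0}
    have hEopen : IsOpen (D ∩ reflectSet D) := by
      apply hopen.inter
      have : reflectSet D = (fun z => (starRingEnd ℂ) z) ⁻¹' D := by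
        ext z; rw [mem_reflectSet]; rfl
      rw [this]
      exact hopen.preimage Complex.continuous_conj
    have hYo : Set.OrdConnected (Complex.im '' D) :=
      ((hconn.image _ Complex.continuous_im.continuousOn).isPreconnected).ordConnected
    have h0Y : (0 : ℝ) ∈ Complex.im '' D := ⟨z₀, hz₀D, hz₀im⟩
    constructor
    · exact ⟨z₀, hz₀E, by simp [hz₀im]⟩
    apply isPreconnected_of_forall z₀
    rintro z ⟨⟨hzD, hzR⟩, hzim⟩
    have hzim : z.im ≤ 0 := hzim
    set a := z.im with ha
    have haY : a ∈ Complex.im '' D := ⟨z, hzD, rfl⟩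
    have hnaY : -a ∈ Complex.im '' D := by
      obtain ⟨u, hu, huc⟩ := hzR
      refine ⟨u, hu, ?_⟩
      have := congrArg Complex.im huc
      simp at this
      linarith
    -- each horizontal slice at height y' ∈ [a,0] meets D ∩ D*
    have hslice : ∀ y' ∈ Set.Icc a (0:ℝ), ∃ x : ℝ, ((x : ℂ) + (y' : ℂ) * I) ∈ D ∩ reflectSet D := by
      intro y' hy'
      have h1 : y' ∈ Complex.im '' D := hYo.out haY h0Y ⟨hy'.1, hy'.2⟩
      have h2 : -y' ∈ Complex.im '' D := hYo.out h0Y hnaY ⟨by linarith [hy'.2], by linarith [hy'.1]⟩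
      obtain ⟨w1, hw1, hw1i⟩ := h1
      obtain ⟨w2, hw2, hw2i⟩ := h2
      refine ⟨max w1.re w2.re, ?_, ?_⟩
      · have h := hconv w1 hw1 (max w1.re w2.re - w1.re) (by simp [le_max_left])
        have heq : w1 + ((max w1.re w2.re - w1.re : ℝ) : ℂ) = ((max w1.re w2.re : ℝ) : ℂ) + (y' : ℂ) * I := by
          apply Complex.ext <;> simp [hw1i]
        rwa [heq] at h
      · rw [mem_reflectSet]
        have h := hconv w2 hw2 (max w1.re w2.re - w2.re) (by simp [le_max_right])
        have heq : w2 + ((max w1.re w2.re - w2.re : ℝ) : ℂ)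
            = (starRingEnd ℂ) (((max w1.re w2.re : ℝ) : ℂ) + (y' : ℂ) * I) := by
          apply Complex.ext <;> simp [hw2i]
        rwa [heq] at h
    -- a uniform bound M via compactness
    have hM : ∃ M : ℝ, z.re ≤ M ∧ x₀ ≤ M ∧
        ∀ y'' ∈ Set.Icc a (0:ℝ), ((M : ℂ) + (y'' : ℂ) * I) ∈ D ∩ reflectSet D := by
      set E := D ∩ reflectSet D with hE
      set U : ↥E → Set ℝ := fun w => {y' : ℝ | (((w : ℂ).re : ℝ) : ℂ) + (y' : ℂ) * I ∈ E} with hUdef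
      have hUopen : ∀ w : ↥E, IsOpen (U w) := by
        intro w
        have : U w = (fun y' : ℝ => (((w : ℂ).re : ℝ) : ℂ) + (y' : ℂ) * I) ⁻¹' E := rfl
        rw [this]
        exact hEopen.preimage (by
          exact continuous_const.add (Complex.continuous_ofReal.mul continuous_const))
      have hcov : Set.Icc a (0:ℝ) ⊆ ⋃ w : ↥E, U w := by
        intro y' hy'
        obtain ⟨x, hx⟩ := hslice y' hy'
        refine Set.mem_iUnion.mpr ⟨⟨(x : ℂ) + (y' : ℂ) * I, hx⟩, ?_⟩
        show (((((x : ℂ) + (y' : ℂ) * I) : ℂ).re : ℝ) : ℂ) + (y' : ℂ) * I ∈ E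
        have : ((((x : ℂ) + (y' : ℂ) * I) : ℂ).re : ℝ) = x := by simp
        rw [this]
        exact hx
      obtain ⟨t, ht⟩ := isCompact_Icc.elim_finite_subcover U hUopen hcov
      obtain ⟨M₀, hM₀⟩ := Finset.exists_le (t.image (fun w : ↥E => (w : ℂ).re))
      refine ⟨max M₀ (max z.re x₀), le_trans (le_max_left _ _) (le_max_right _ _),
        le_trans (le_max_right _ _) (le_max_right _ _), ?_⟩
      intro y'' hy''
      obtain ⟨w, hwt, hwy⟩ := Set.mem_iUnion₂.mp (ht hy'')
      have hwE : (((w : ℂ).re : ℝ) : ℂ) + (y'' : ℂ) * I ∈ E := hwy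
      have hwle : (w : ℂ).re ≤ max M₀ (max z.re x₀) :=
        le_trans (hM₀ _ (Finset.mem_image_of_mem _ hwt)) (le_max_left _ _)
      have h := hconvE _ hwE (max M₀ (max z.re x₀) - (w : ℂ).re) (by linarith)
      have heq : ((((w : ℂ).re : ℝ) : ℂ) + (y'' : ℂ) * I)
          + ((max M₀ (max z.re x₀) - (w : ℂ).re : ℝ) : ℂ)
          = ((max M₀ (max z.re x₀) : ℝ) : ℂ) + (y'' : ℂ) * I := by
        apply Complex.ext <;> simp
      rwa [heq] at h
    obtain ⟨M, hMz, hMx, hMseg⟩ := hM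
    -- the connecting set: three segments
    set q : ℂ := (M : ℂ) + (a : ℂ) * I with hq
    refine ⟨segment ℝ z₀ (M : ℂ) ∪ (segment ℝ q (M : ℂ) ∪ segment ℝ z q), ?_, ?_, ?_, ?_⟩
    · -- subset
      rintro w (hw | hw | hw)
      · -- real segment from z₀ to M
        rw [segment_eq_image' ℝ] at hw
        obtain ⟨θ, hθ, rfl⟩ := hw
        have heq : (fun θ : ℝ => z₀ + θ • ((M : ℂ) - z₀)) θ = z₀ + ((θ * (M - x₀) : ℝ) : ℂ) := by
          show z₀ + θ • ((M : ℂ) - z₀) = _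
          rw [Complex.real_smul, ← hz₀eq]; push_cast; ring
        rw [heq]
        refine ⟨hconvE z₀ hz₀E _ (mul_nonneg hθ.1 (by linarith)), ?_⟩
        simp [hz₀im]
      · -- vertical segment from q to M
        rw [segment_eq_image' ℝ] at hw
        obtain ⟨θ, hθ, rfl⟩ := hw
        have heq : (fun θ : ℝ => q + θ • ((M : ℂ) - q)) θ = (M : ℂ) + (((1 - θ) * a : ℝ) : ℂ) * I := by
          show q + θ • ((M : ℂ) - q) = _
          rw [Complex.real_smul, hq]; push_cast; ring
        rw [heq]
        refine ⟨hMseg _ ⟨?_, ?_⟩, ?_⟩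
        · nlinarith [hθ.1, hθ.2]
        · nlinarith [hθ.1, hθ.2]
        · show ((M : ℂ) + (((1 - θ) * a : ℝ) : ℂ) * I).im ≤ 0
          simp only [Complex.add_im, Complex.ofReal_re, Complex.ofReal_im, Complex.mul_im,
            Complex.I_re, Complex.I_im, mul_zero, mul_one, zero_add]
          nlinarith [hθ.1, hθ.2]
      · -- horizontal segment from z to q
        rw [segment_eq_image' ℝ] at hw
        obtain ⟨θ, hθ, rfl⟩ := hw
        have hqz : q - z = ((M - z.re : ℝ) : ℂ) := by
          rw [hq]; apply Complex.ext <;> simp [← ha]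
        have heq : (fun θ : ℝ => z + θ • (q - z)) θ = z + ((θ * (M - z.re) : ℝ) : ℂ) := by
          show z + θ • (q - z) = _
          rw [Complex.real_smul, hqz]; push_cast; ring
        rw [heq]
        refine ⟨hconvE z ⟨hzD, hzR⟩ _ (mul_nonneg hθ.1 (by linarith)), ?_⟩
        show (z + ((θ * (M - z.re) : ℝ) : ℂ)).im ≤ 0
        simpa using hzim
    · exact Or.inl (left_mem_segment ℝ z₀ (M : ℂ))
    · exact Or.inr (Or.inr (left_mem_segment ℝ z q))
    · -- preconnectedness of the union
      apply IsPreconnected.union (M : ℂ)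
      · exact right_mem_segment ℝ z₀ (M : ℂ)
      · exact Or.inl (right_mem_segment ℝ q (M : ℂ))
      · exact (convex_segment z₀ (M : ℂ)).isPreconnected
      · apply IsPreconnected.union q
        · exact left_mem_segment ℝ q (M : ℂ)
        · exact right_mem_segment ℝ z q
        · exact (convex_segment q (M : ℂ)).isPreconnected
        · exact (convex_segment z q).isPreconnected
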